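/- Let G be a simple graph with weight function w: E(G) -> Z_{>0}, and let x^a be a monomial not in I(G_w). Then the radical of (I(G_w) : x^a) is generated by a set of monomials each of which is either a single variable or a product x_i x_j corresponding to an edge of G; consequently sqrt(I(G_w) : x^a) = I(G[W]) + (a set of variables) for some subset W of V(G). -/

import Mathlib

open MvPolynomial

section Helpers

variable {K : Type*} [Field K] {n : ℕ}

private lemma mem_span_mono_iff (E : Set (Fin n →₀ ℕ)) (f : MvPolynomial (Fin n) K) :
    f ∈ Ideal.span ((fun d => (monomial d (1:K))) '' E) ↔
      ∀ b ∈ f.support, ∃ d ∈ E, d ≤ b := by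
  constructor
  · intro hf
    refine Submodule.span_induction ?_ ?_ ?_ ?_ hf
    · rintro p ⟨d, hd, rfl⟩ b hb
      classical
      rw [support_monomial, if_neg one_ne_zero] at hb
      simp only [Finset.mem_singleton] at hb
      exact ⟨d, hd, hb ▸ le_rfl⟩
    · simp
    · intro p q _ _ hp hq b hb
      rcases Finset.mem_union.mp (support_add hb) with h | h
      · exact hp b h
      · exact hq b h
    · intro r p _ hp b hb
      rw [smul_eq_mul] at hb
      obtain ⟨b1, hb1, b2, hb2, rfl⟩ := Finset.mem_add.mp (support_mul r p hb)
      obtain ⟨d, hd, hdb⟩ := hp b2 hb2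
      exact ⟨d, hd, hdb.trans le_add_self⟩
  · intro h
    rw [f.as_sum]
    refine Ideal.sum_mem _ fun b hb => ?_
    obtain ⟨d, hdE, hdb⟩ := h b hb
    have : monomial b (coeff b f) = monomial (b - d) (coeff b f) * monomial d 1 := by
      rw [monomial_mul, mul_one, tsub_add_cancel_of_le hdb]
    rw [this]
    exact Ideal.mul_mem_left _ _ (Ideal.subset_span ⟨d, hdE, rfl⟩)

private noncomputable def mo {n : ℕ} : MonomialOrder (Fin n) := MonomialOrder.lex

private lemma coeff_pow_max (f : MvPolynomial (Fin n) K) (β : Fin n →₀ ℕ)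
    (hmax : ∀ b ∈ f.support, (mo (n := n)).toSyn b ≤ mo.toSyn β) (k : ℕ) :
    coeff (k • β) (f ^ k) = (coeff β f) ^ k ∧
      ∀ b ∈ (f ^ k).support, mo.toSyn b ≤ mo.toSyn (k • β) := by
  induction k with
  | zero =>
    simp only [zero_smul, pow_zero]
    constructor
    · simp [coeff_one]
    · intro b hb
      classical
      rw [show (1 : MvPolynomial (Fin n) K) = monomial 0 1 by simp,
        support_monomial, if_neg one_ne_zero] at hb
      simp only [Finset.mem_singleton] at hb
      subst hb; rfl
  | succ k ih =>
    have hsum : (k + 1) • β = k • β + β := succ_nsmul β k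
    constructor
    · rw [pow_succ, coeff_mul]
      rw [Finset.sum_eq_single (k • β, β)]
      · rw [ih.1, pow_succ]
      · rintro ⟨x1, x2⟩ hx hne
        rw [Finset.HasAntidiagonal.mem_antidiagonal] at hx
        by_contra hc
        have h1 : coeff x1 (f ^ k) ≠ 0 := fun h => hc (by simp [h])
        have h2 : coeff x2 f ≠ 0 := fun h => hc (by simp [h])
        have hb1 : mo.toSyn x1 ≤ mo.toSyn (k • β) :=
          ih.2 x1 (mem_support_iff.mpr h1)
        have hb2 : mo.toSyn x2 ≤ mo.toSyn β := hmax x2 (mem_support_iff.mpr h2)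
        have hadd : mo.toSyn x1 + mo.toSyn x2 = mo.toSyn (k • β) + mo.toSyn β := by
          rw [← map_add, ← map_add, hx, hsum]
        have e1 : mo.toSyn x1 = mo.toSyn (k • β) := le_antisymm hb1 (by
          by_contra hlt
          have := add_lt_add_of_lt_of_le (lt_of_le_of_ne hb1 (fun h => hlt h.ge)) hb2
          rw [hadd] at this; exact lt_irrefl _ this)
        have e2 : mo.toSyn x2 = mo.toSyn β := by
          have := hadd; rw [e1] at this; exact add_left_cancel this
        exact hne (Prod.ext (mo.toSyn.injective e1) (mo.toSyn.injective e2))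
      · intro h
        exact absurd (Finset.HasAntidiagonal.mem_antidiagonal.mpr hsum.symm) h
    · intro b hb
      rw [pow_succ] at hb
      obtain ⟨b1, hb1, b2, hb2, rfl⟩ := Finset.mem_add.mp (support_mul (f ^ k) f hb)
      rw [hsum, map_add, map_add]
      exact add_le_add (ih.2 b1 hb1) (hmax b2 hb2)

private lemma radical_span_sqfree (E : Set (Fin n →₀ ℕ)) (hE : ∀ d ∈ E, ∀ i, d i ≤ 1) :
    (Ideal.span ((fun d => (monomial d (1:K))) '' E)).radical
      = Ideal.span ((fun d => (monomial d (1:K))) '' E) := by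
  set J := Ideal.span ((fun d => (monomial d (1:K))) '' E) with hJ
  refine le_antisymm ?_ Ideal.le_radical
  have key : ∀ N : ℕ, ∀ f : MvPolynomial (Fin n) K, f.support.card ≤ N →
      f ∈ J.radical → f ∈ J := by
    intro N
    induction N with
    | zero =>
      intro f hcard _
      have : f = 0 := by
        rwa [Nat.le_zero, Finset.card_eq_zero, support_eq_empty] at hcard
      exact this ▸ J.zero_mem
    | succ N ihN =>
      intro f hcard hf
      by_cases hf0 : f = 0
      · exact hf0 ▸ J.zero_mem
      obtain ⟨β, hβmem, hβmax⟩ :=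
        Finset.exists_max_image f.support (fun b => (mo (n:=n)).toSyn b)
          (support_nonempty.mpr hf0)
      obtain ⟨k, hk⟩ := hf
      rcases Nat.eq_zero_or_pos k with rfl | hkpos
      · rw [pow_zero] at hk
        exact J.eq_top_iff_one.mpr hk ▸ Submodule.mem_top
      have hcf : coeff β f ≠ 0 := mem_support_iff.mp hβmem
      have hpow := coeff_pow_max f β hβmax k
      have hksupp : k • β ∈ (f ^ k).support := by
        rw [mem_support_iff, hpow.1]
        exact pow_ne_zero _ hcf
      obtain ⟨d, hdE, hdle⟩ := (mem_span_mono_iff E (f ^ k)).mp hk (k • β) hksupp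
      have hdβ : d ≤ β := by
        intro i
        have h1 := hE d hdE i
        have h2 : d i ≤ k * β i := by simpa using hdle i
        rcases Nat.eq_zero_or_pos (β i) with h | h
        · rw [h, Nat.mul_zero] at h2; omega
        · omega
      have hmemJ : (monomial β (coeff β f) : MvPolynomial (Fin n) K) ∈ J := by
        rw [hJ, mem_span_mono_iff]
        intro b hb
        classical
        rw [support_monomial, if_neg hcf] at hb
        simp only [Finset.mem_singleton] at hb
        exact ⟨d, hdE, hb ▸ hdβ⟩
      have hg : f - monomial β (coeff β f) ∈ J.radical :=
        sub_mem ⟨k, hk⟩ (Ideal.le_radical hmemJ)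
      have hgsupp : (f - monomial β (coeff β f)).support = f.support.erase β := by
        classical
        ext b
        simp only [mem_support_iff, Finset.mem_erase, coeff_sub, coeff_monomial]
        rcases eq_or_ne b β with rfl | hbb
        · simp
        · simp [if_neg (fun h : β = b => hbb h.symm), hbb, mem_support_iff]
      have hcard' : (f - monomial β (coeff β f)).support.card ≤ N := by
        rw [hgsupp]
        have := Finset.card_erase_of_mem hβmem
        omega
      have : f = (f - monomial β (coeff β f)) + monomial β (coeff β f) := by ring
      rw [this]
      exact J.add_mem (ihN _ hcard' hg) hmemJ
  intro f hf
  exact key f.support.card f le_rfl hf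


private lemma wpair_le {n : ℕ} {c : ℕ} {i j : Fin n} {b : Fin n →₀ ℕ} (hne : i ≠ j)
    (hi : c ≤ b i) (hj : c ≤ b j) :
    c • (Finsupp.single i 1 + Finsupp.single j 1) ≤ b := by
  intro t
  simp only [Finsupp.smul_apply, Finsupp.add_apply, Finsupp.single_apply, smul_eq_mul]
  by_cases h1 : i = t <;> by_cases h2 : j = t <;> subst_eqs <;> simp_all

private lemma single_le {n : ℕ} {j : Fin n} {b : Fin n →₀ ℕ} (hj : 1 ≤ b j) :
    Finsupp.single j 1 ≤ b := by
  intro t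
  simp only [Finsupp.single_apply]
  by_cases h2 : j = t <;> subst_eqs <;> simp_all

private lemma wpair_apply_left {n : ℕ} {c : ℕ} {i j : Fin n} (hne : i ≠ j) :
    (c • (Finsupp.single i 1 + Finsupp.single j 1) : Fin n →₀ ℕ) i = c := by
  simp [Finsupp.single_eq_of_ne' (fun h : j = i => hne h.symm)]

private lemma wpair_apply_right {n : ℕ} {c : ℕ} {i j : Fin n} (hne : i ≠ j) :
    (c • (Finsupp.single i 1 + Finsupp.single j 1) : Fin n →₀ ℕ) j = c := by
  simp [Finsupp.single_eq_of_ne' hne]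

end Helpers

/-- For any edge weight function `w` on a simple graph `G` and
any monomial `x^a ∉ I(G_w)`, the radical `√(I(G_w) : x^a)` equals
`I(G[W]) + (a set of variables)` for some subset `W` of the vertices; in
particular it is generated by variables and edge monomials of `G`. -/
theorem stmt7 (K : Type*) [Field K] (n : ℕ) (G : SimpleGraph (Fin n))
    (w : Fin n → Fin n → ℕ) (hsym : ∀ i j, w i j = w j i)
    (hpos : ∀ i j, G.Adj i j → 0 < w i j)
    (I : Ideal (MvPolynomial (Fin n) K))
    (hI : I = Ideal.span {p | ∃ i j, G.Adj i j ∧ p = (X i * X j) ^ w i j})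
    (a : Fin n → ℕ)
    (ha : (∏ i, (X i : MvPolynomial (Fin n) K) ^ a i) ∉ I) :
    ∃ W Y : Set (Fin n),
      (Submodule.colon I
          (Ideal.span {∏ i, (X i : MvPolynomial (Fin n) K) ^ a i})).radical
        = Ideal.span ({p | ∃ i j, i ∈ W ∧ j ∈ W ∧ G.Adj i j ∧ p = X i * X j}
            ∪ (fun i => (X i : MvPolynomial (Fin n) K)) '' Y) := by
  classical
  set a' : Fin n →₀ ℕ := Finsupp.equivFunOnFinite.symm a with ha'def
  have ha'app : ∀ i, a' i = a i := fun i => rfl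
  have hm : (∏ i, (X i : MvPolynomial (Fin n) K) ^ a i) = monomial a' 1 := by
    rw [← prod_X_pow_eq_monomial,
      show (∏ i, (X i : MvPolynomial (Fin n) K) ^ a i)
          = ∏ i, X i ^ a' i from Finset.prod_congr rfl (fun i _ => by rw [ha'app])]
    exact (Finset.prod_subset (Finset.subset_univ _)
      (fun i _ hi => by rw [Finsupp.notMem_support_iff.mp hi, pow_zero])).symm
  -- exponent sets
  set EI : Set (Fin n →₀ ℕ) :=
    {d | ∃ i j, G.Adj i j ∧ d = w i j • (Finsupp.single i 1 + Finsupp.single j 1)} with hEI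
  set Y : Set (Fin n) := {j | ∃ i, G.Adj i j ∧ w i j ≤ a i} with hY
  set EJ : Set (Fin n →₀ ℕ) :=
    {d | ∃ i j, G.Adj i j ∧ d = Finsupp.single i 1 + Finsupp.single j 1}
      ∪ {d | ∃ j ∈ Y, d = Finsupp.single j 1} with hEJ
  have hgen : ∀ i j : Fin n, ((X i * X j : MvPolynomial (Fin n) K)) ^ w i j
      = monomial (w i j • (Finsupp.single i 1 + Finsupp.single j 1)) 1 := by
    intro i j
    rw [X, X, monomial_mul, one_mul, monomial_pow, one_pow]
  have hgen1 : ∀ i j : Fin n, (X i * X j : MvPolynomial (Fin n) K)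
      = monomial (Finsupp.single i 1 + Finsupp.single j 1) 1 := by
    intro i j
    rw [X, X, monomial_mul, one_mul]
  have hIset : I = Ideal.span ((fun d => monomial d (1:K)) '' EI) := by
    rw [hI]
    congr 1
    ext p
    constructor
    · rintro ⟨i, j, hij, rfl⟩
      exact ⟨_, ⟨i, j, hij, rfl⟩, (hgen i j).symm⟩
    · rintro ⟨d, ⟨i, j, hij, rfl⟩, rfl⟩
      exact ⟨i, j, hij, (hgen i j).symm⟩

  -- the monomial x^a is not in I, so no edge has both weights ≤ a
  have hno : ∀ i j, G.Adj i j → w i j ≤ a i → w i j ≤ a j → False := by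
    intro i j hij h1 h2
    apply ha
    rw [hIset, hm, mem_span_mono_iff]
    intro b hb
    rw [support_monomial, if_neg one_ne_zero] at hb
    simp only [Finset.mem_singleton] at hb
    subst hb
    refine ⟨_, ⟨i, j, hij, rfl⟩, wpair_le hij.ne ?_ ?_⟩
    · rw [ha'app]; exact h1
    · rw [ha'app]; exact h2
  have hsq : ∀ d ∈ EJ, ∀ t, d t ≤ 1 := by
    rintro d (⟨i, j, hij, rfl⟩ | ⟨j, _, rfl⟩) t
    · have hne : i ≠ j := hij.ne
      simp only [Finsupp.add_apply, Finsupp.single_apply]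
      rcases eq_or_ne i t with rfl | hit
      · rw [if_pos rfl, if_neg (fun h => hne h.symm)]
        omega
      · rw [if_neg hit]
        split <;> omega
    · simp [Finsupp.single_apply]
      split <;> omega
  have hJset : ({p | ∃ i j, i ∈ (Set.univ : Set (Fin n)) ∧ j ∈ (Set.univ : Set (Fin n))
        ∧ G.Adj i j ∧ p = X i * X j}
      ∪ (fun i => (X i : MvPolynomial (Fin n) K)) '' Y)
      = (fun d => monomial d (1:K)) '' EJ := by
    ext p
    constructor
    · rintro (⟨i, j, -, -, hij, rfl⟩ | ⟨j, hj, rfl⟩)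
      · exact ⟨_, Or.inl ⟨i, j, hij, rfl⟩, (hgen1 i j).symm⟩
      · exact ⟨_, Or.inr ⟨j, hj, rfl⟩, rfl⟩
    · rintro ⟨d, (⟨i, j, hij, rfl⟩ | ⟨j, hj, rfl⟩), rfl⟩
      · exact Or.inl ⟨i, j, trivial, trivial, hij, (hgen1 i j).symm⟩
      · exact Or.inr ⟨j, hj, rfl⟩
  refine ⟨Set.univ, Y, ?_⟩
  rw [hJset, hm]
  -- inclusion 1 : colon ideal ⊆ span EJ
  have h1 : Submodule.colon I (Ideal.span {(monomial a' 1 : MvPolynomial (Fin n) K)})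
      ≤ Ideal.span ((fun d => monomial d (1:K)) '' EJ) := by
    intro f hf
    have hfm : f * monomial a' 1 ∈ I := Ideal.mem_colon_span_singleton.mp hf
    rw [hIset, mem_span_mono_iff] at hfm
    rw [mem_span_mono_iff]
    intro b hb
    have hco : coeff (b + a') (f * monomial a' 1) ≠ 0 := by
      rw [coeff_mul_monomial]
      simpa using mem_support_iff.mp hb
    obtain ⟨d, ⟨i, j, hij, rfl⟩, hdle⟩ := hfm _ (mem_support_iff.mpr hco)
    have hne : i ≠ j := hij.ne
    have hi : w i j ≤ b i + a i := by
      have h := hdle i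
      rw [wpair_apply_left hne, Finsupp.add_apply, ha'app] at h
      exact h
    have hj : w i j ≤ b j + a j := by
      have h := hdle j
      rw [wpair_apply_right hne, Finsupp.add_apply, ha'app] at h
      exact h
    by_cases hcase : w i j ≤ a i
    · have haj : a j < w i j := lt_of_not_ge (fun h => hno i j hij hcase h)
      have hbj : 1 ≤ b j := by omega
      exact ⟨Finsupp.single j 1, Or.inr ⟨j, ⟨i, hij, hcase⟩, rfl⟩, single_le hbj⟩
    · by_cases hcase2 : w i j ≤ a j
      · have hai : a i < w i j := lt_of_not_ge hcase
        have hbi : 1 ≤ b i := by omega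
        exact ⟨Finsupp.single i 1,
          Or.inr ⟨i, ⟨j, hij.symm, by rw [← hsym i j]; exact hcase2⟩, rfl⟩, single_le hbi⟩
      · have hbi : 1 ≤ b i := by omega
        have hbj : 1 ≤ b j := by omega
        refine ⟨Finsupp.single i 1 + Finsupp.single j 1, Or.inl ⟨i, j, hij, rfl⟩, ?_⟩
        have := wpair_le (c := 1) hne hbi hbj
        simpa using this
  -- inclusion 2 : span EJ ⊆ radical of colon
  have h2 : Ideal.span ((fun d => monomial d (1:K)) '' EJ)
      ≤ (Submodule.colon I (Ideal.span {(monomial a' 1 : MvPolynomial (Fin n) K)})).radical := by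
    rw [Ideal.span_le]
    rintro p ⟨d, (⟨i, j, hij, rfl⟩ | ⟨j, ⟨i, hij, hwa⟩, rfl⟩), rfl⟩
    · -- edge monomial
      refine ⟨w i j, ?_⟩
      rw [Ideal.mem_colon_span_singleton]
      have hIel : ((X i * X j : MvPolynomial (Fin n) K)) ^ w i j ∈ I :=
        hI ▸ Ideal.subset_span ⟨i, j, hij, rfl⟩
      rw [hgen1 i j] at hIel
      exact Ideal.mul_mem_right _ _ hIel
    · -- variable monomial, j ∈ Y with witness i
      refine ⟨w i j, ?_⟩
      rw [Ideal.mem_colon_span_singleton]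
      have hne : i ≠ j := hij.ne
      rw [monomial_pow, one_pow, monomial_mul, mul_one]
      rw [hIset, mem_span_mono_iff]
      intro b hb
      rw [support_monomial, if_neg one_ne_zero] at hb
      simp only [Finset.mem_singleton] at hb
      subst hb
      refine ⟨_, ⟨i, j, hij, rfl⟩, wpair_le hne ?_ ?_⟩
      · rw [Finsupp.add_apply, Finsupp.smul_apply, Finsupp.single_eq_of_ne' (Ne.symm hne), ha'app]
        simpa using hwa
      · rw [Finsupp.add_apply, Finsupp.smul_apply, Finsupp.single_eq_same, ha'app]
        simp only [smul_eq_mul, mul_one]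
        exact Nat.le_add_right _ _
  exact le_antisymm ((Ideal.radical_mono h1).trans (radical_span_sqfree _ hsq).le) h2
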